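/- Let μ̄_X = sup_{P∈𝒫} E_P[X], μ_X = inf_{P∈𝒫} E_P[X], with Δ_X = μ̄_X − μ_X, and similarly for Y. Let Ē[Z] = sup_{P∈𝒫} E_P[Z] and C̄(X,Y) = sup_{P∈conv(𝒫)} Cov_P(X,Y). Then taking (μ₁,μ₂) = (μ̄_X, μ̄_Y) or (μ_X, μ_Y), one has C̄(X,Y) ≤ Ē[(X−μ₁)(Y−μ₂)] ≤ C̄(X,Y) + Δ_XΔ_Y. -/

import Mathlib

open MeasureTheory ENNReal

variable {Ω : Type*} [MeasurableSpace Ω]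

/-- Classical covariance of `X` and `Y` under `P`. -/
noncomputable def covP (P : Measure Ω) (X Y : Ω → ℝ) : ℝ :=
  (∫ ω, X ω * Y ω ∂P) - (∫ ω, X ω ∂P) * (∫ ω, Y ω ∂P)

/-- Classical variance of `X` under `P`. -/
noncomputable def varP (P : Measure Ω) (X : Ω → ℝ) : ℝ :=
  (∫ ω, (X ω) ^ 2 ∂P) - (∫ ω, X ω ∂P) ^ 2

/-- The convex hull of a set of measures: all finite convex combinations. -/
def convHullP (S : Set (Measure Ω)) : Set (Measure Ω) :=
  { Q | ∃ (n : ℕ) (w : Fin n → ℝ≥0∞) (P : Fin n → Measure Ω),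
      (∑ i, w i = 1) ∧ (∀ i, P i ∈ S) ∧ Q = ∑ i, w i • P i }

private lemma convex_sum_le {n : ℕ} {v a : Fin n → ℝ} (hv : ∀ i, 0 ≤ v i)
    (hs : ∑ i, v i = 1) {c : ℝ} (ha : ∀ i, a i ≤ c) : ∑ i, v i * a i ≤ c := by
  calc ∑ i, v i * a i ≤ ∑ i, v i * c :=
        Finset.sum_le_sum fun i _ => mul_le_mul_of_nonneg_left (ha i) (hv i)
    _ = c := by rw [← Finset.sum_mul, hs, one_mul]

private lemma convex_sum_ge {n : ℕ} {v a : Fin n → ℝ} (hv : ∀ i, 0 ≤ v i)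
    (hs : ∑ i, v i = 1) {c : ℝ} (ha : ∀ i, c ≤ a i) : c ≤ ∑ i, v i * a i := by
  calc c = ∑ i, v i * c := by rw [← Finset.sum_mul, hs, one_mul]
    _ ≤ ∑ i, v i * a i :=
        Finset.sum_le_sum fun i _ => mul_le_mul_of_nonneg_left (ha i) (hv i)

private lemma integrable_mul_L2 {P : Measure Ω} {X Y : Ω → ℝ} (hX : MemLp X 2 P)
    (hY : MemLp Y 2 P) : Integrable (fun ω => X ω * Y ω) P := by
  refine ((hX.integrable_sq.add hY.integrable_sq).div_const 2).mono'
    (hX.aestronglyMeasurable.mul hY.aestronglyMeasurable) ?_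
  filter_upwards with ω
  simp only [Pi.add_apply, Real.norm_eq_abs, abs_mul]
  nlinarith [sq_nonneg (|X ω| - |Y ω|), sq_abs (X ω), sq_abs (Y ω),
    abs_nonneg (X ω), abs_nonneg (Y ω)]

private lemma integral_expand (P : Measure Ω) [IsProbabilityMeasure P] {X Y : Ω → ℝ}
    (μ₁ μ₂ : ℝ) (hXY : Integrable (fun ω => X ω * Y ω) P) (hX : Integrable X P)
    (hY : Integrable Y P) :
    ∫ ω, (X ω - μ₁) * (Y ω - μ₂) ∂P =
      (∫ ω, X ω * Y ω ∂P) - μ₂ * (∫ ω, X ω ∂P) - μ₁ * (∫ ω, Y ω ∂P) + μ₁ * μ₂ := by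
  have h1 : ∫ ω, (X ω - μ₁) * (Y ω - μ₂) ∂P
      = ∫ ω, ((X ω * Y ω - μ₂ * X ω) - (μ₁ * Y ω - μ₁ * μ₂)) ∂P := by
    apply integral_congr_ae
    filter_upwards with ω
    ring
  have i1 : Integrable (fun ω => μ₂ * X ω) P := hX.const_mul μ₂
  have i2 : Integrable (fun ω => μ₁ * Y ω) P := hY.const_mul μ₁
  have i3 : Integrable (fun ω => μ₁ * Y ω - μ₁ * μ₂) P := i2.sub (integrable_const _)
  have i4 : Integrable (fun ω => X ω * Y ω - μ₂ * X ω) P := hXY.sub i1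
  rw [h1, integral_sub i4 i3, integral_sub hXY i1, integral_sub i2 (integrable_const _),
    integral_const_mul, integral_const_mul, integral_const]
  simp only [measure_univ, ENNReal.toReal_one, smul_eq_mul, one_mul, probReal_univ]
  ring

private lemma w_ne_top {n : ℕ} {w : Fin n → ℝ≥0∞} (hw : ∑ i, w i = 1) (i : Fin n) :
    w i ≠ ∞ := by
  have h : w i ≤ 1 := hw ▸ Finset.single_le_sum (fun j _ => zero_le) (Finset.mem_univ i)
  exact (lt_of_le_of_lt h ENNReal.one_lt_top).ne

private lemma integral_convex_comb {n : ℕ} {w : Fin n → ℝ≥0∞} {Ps : Fin n → Measure Ω}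
    (hw : ∑ i, w i = 1) (Z : Ω → ℝ) (hZ : ∀ i, Integrable Z (Ps i)) :
    ∫ ω, Z ω ∂(∑ i, w i • Ps i) = ∑ i, (w i).toReal * ∫ ω, Z ω ∂(Ps i) := by
  rw [integral_finset_sum_measure (fun i _ => (hZ i).smul_measure (w_ne_top hw i))]
  simp [integral_smul_measure, smul_eq_mul]

private lemma isProb_convex_comb {n : ℕ} {w : Fin n → ℝ≥0∞} {Ps : Fin n → Measure Ω}
    (hw : ∑ i, w i = 1) (hprob : ∀ i, IsProbabilityMeasure (Ps i)) :
    IsProbabilityMeasure (∑ i, w i • Ps i) := by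
  constructor
  rw [Measure.finset_sum_apply]
  simp only [Measure.smul_apply, measure_univ, smul_eq_mul, mul_one]
  exact hw

private lemma abs_int_le_of_sq (P : Measure Ω) [IsProbabilityMeasure P] {Z : Ω → ℝ}
    (hZ : Integrable Z P) (hZ2 : Integrable (fun ω => (Z ω) ^ 2) P) {m : ℝ}
    (hm : ∫ ω, (Z ω) ^ 2 ∂P ≤ m) : |∫ ω, Z ω ∂P| ≤ (1 + m) / 2 := by
  have h1 : |∫ ω, Z ω ∂P| ≤ ∫ ω, |Z ω| ∂P := by
    simpa [Real.norm_eq_abs] using norm_integral_le_integral_norm (μ := P) Z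
  have h2 : ∫ ω, |Z ω| ∂P ≤ ∫ ω, (1 + (Z ω) ^ 2) / 2 ∂P := by
    refine integral_mono hZ.abs (((integrable_const 1).add hZ2).div_const 2) fun ω => ?_
    nlinarith [sq_nonneg (|Z ω| - 1), sq_abs (Z ω)]
  have h3 : ∫ ω, (1 + (Z ω) ^ 2) / 2 ∂P = (1 + ∫ ω, (Z ω) ^ 2 ∂P) / 2 := by
    rw [integral_div, integral_add (integrable_const 1) hZ2, integral_const]
    simp [measure_univ]
  linarith

private lemma abs_int_mul_le (P : Measure Ω) [IsProbabilityMeasure P] {X Y : Ω → ℝ}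
    (hXY : Integrable (fun ω => X ω * Y ω) P)
    (hX2 : Integrable (fun ω => (X ω) ^ 2) P) (hY2 : Integrable (fun ω => (Y ω) ^ 2) P)
    {m : ℝ} (hm : (∫ ω, (X ω) ^ 2 ∂P) + ∫ ω, (Y ω) ^ 2 ∂P ≤ m) :
    |∫ ω, X ω * Y ω ∂P| ≤ m / 2 := by
  have h1 : |∫ ω, X ω * Y ω ∂P| ≤ ∫ ω, |X ω| * |Y ω| ∂P := by
    simpa [Real.norm_eq_abs, abs_mul] using
      norm_integral_le_integral_norm (μ := P) fun ω => X ω * Y ω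
  have h2 : ∫ ω, |X ω| * |Y ω| ∂P ≤ ∫ ω, ((X ω) ^ 2 + (Y ω) ^ 2) / 2 ∂P := by
    refine integral_mono (by simpa [abs_mul] using hXY.abs) ((hX2.add hY2).div_const 2)
      fun ω => ?_
    nlinarith [sq_nonneg (|X ω| - |Y ω|), sq_abs (X ω), sq_abs (Y ω),
      abs_nonneg (X ω), abs_nonneg (Y ω)]
  have h3 : ∫ ω, ((X ω) ^ 2 + (Y ω) ^ 2) / 2 ∂P
      = ((∫ ω, (X ω) ^ 2 ∂P) + ∫ ω, (Y ω) ^ 2 ∂P) / 2 := by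
    rw [integral_div, integral_add hX2 hY2]
  linarith

theorem stmt11 (S : Set (Measure Ω)) (hS : S.Nonempty)
    (hprob : ∀ P ∈ S, IsProbabilityMeasure P) (X Y : Ω → ℝ)
    (hXY : ∀ P ∈ S, MemLp X 2 P ∧ MemLp Y 2 P)
    (hbdd : BddAbove ((fun P => (∫ ω, (X ω) ^ 2 ∂P) + ∫ ω, (Y ω) ^ 2 ∂P) '' S))
    (μ₁ μ₂ : ℝ)
    (hμ : (μ₁ = sSup ((fun P => ∫ ω, X ω ∂P) '' S) ∧
            μ₂ = sSup ((fun P => ∫ ω, Y ω ∂P) '' S)) ∨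
          (μ₁ = sInf ((fun P => ∫ ω, X ω ∂P) '' S) ∧
            μ₂ = sInf ((fun P => ∫ ω, Y ω ∂P) '' S))) :
    sSup ((fun P => covP P X Y) '' convHullP S) ≤
      sSup ((fun P => ∫ ω, (X ω - μ₁) * (Y ω - μ₂) ∂P) '' S) ∧
    sSup ((fun P => ∫ ω, (X ω - μ₁) * (Y ω - μ₂) ∂P) '' S) ≤
      sSup ((fun P => covP P X Y) '' convHullP S) +
        (sSup ((fun P => ∫ ω, X ω ∂P) '' S) - sInf ((fun P => ∫ ω, X ω ∂P) '' S)) *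
        (sSup ((fun P => ∫ ω, Y ω ∂P) '' S) - sInf ((fun P => ∫ ω, Y ω ∂P) '' S)) := by
  classical
  obtain ⟨M, hM⟩ := hbdd
  have hMS : ∀ P ∈ S, (∫ ω, (X ω) ^ 2 ∂P) + ∫ ω, (Y ω) ^ 2 ∂P ≤ M := fun P hP =>
    hM ⟨P, hP, rfl⟩
  set F : Measure Ω → ℝ := fun P => ∫ ω, X ω ∂P with hF
  set G : Measure Ω → ℝ := fun P => ∫ ω, Y ω ∂P with hG
  set H : Measure Ω → ℝ := fun P => ∫ ω, (X ω - μ₁) * (Y ω - μ₂) ∂P with hH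
  set B1 : ℝ := (1 + M) / 2 with hB1
  set BH : ℝ := M / 2 + |μ₂| * B1 + |μ₁| * B1 + |μ₁| * |μ₂| with hBH
  -- per-measure facts
  have hfacts : ∀ P ∈ S, Integrable X P ∧ Integrable Y P ∧
      Integrable (fun ω => X ω * Y ω) P ∧
      Integrable (fun ω => (X ω - μ₁) * (Y ω - μ₂)) P ∧
      |F P| ≤ B1 ∧ |G P| ≤ B1 ∧ |∫ ω, X ω * Y ω ∂P| ≤ M / 2 ∧
      H P = (∫ ω, X ω * Y ω ∂P) - μ₂ * F P - μ₁ * G P + μ₁ * μ₂ ∧ |H P| ≤ BH := by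
    intro P hP
    haveI := hprob P hP
    obtain ⟨hX2, hY2⟩ := hXY P hP
    have hIX : Integrable X P := hX2.integrable one_le_two
    have hIY : Integrable Y P := hY2.integrable one_le_two
    have hIXY : Integrable (fun ω => X ω * Y ω) P := integrable_mul_L2 hX2 hY2
    have hIprod : Integrable (fun ω => (X ω - μ₁) * (Y ω - μ₂)) P :=
      integrable_mul_L2 (hX2.sub (memLp_const μ₁)) (hY2.sub (memLp_const μ₂))
    have hIX2 := hX2.integrable_sq
    have hIY2 := hY2.integrable_sq
    have hX2nn : (0:ℝ) ≤ ∫ ω, (X ω) ^ 2 ∂P := integral_nonneg fun ω => sq_nonneg _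
    have hY2nn : (0:ℝ) ≤ ∫ ω, (Y ω) ^ 2 ∂P := integral_nonneg fun ω => sq_nonneg _
    have hsum := hMS P hP
    have hFb : |F P| ≤ B1 := abs_int_le_of_sq P hIX hIX2 (by linarith)
    have hGb : |G P| ≤ B1 := abs_int_le_of_sq P hIY hIY2 (by linarith)
    have hXYb : |∫ ω, X ω * Y ω ∂P| ≤ M / 2 := abs_int_mul_le P hIXY hIX2 hIY2 hsum
    have hHexp : H P = (∫ ω, X ω * Y ω ∂P) - μ₂ * F P - μ₁ * G P + μ₁ * μ₂ :=
      integral_expand P μ₁ μ₂ hIXY hIX hIY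
    refine ⟨hIX, hIY, hIXY, hIprod, hFb, hGb, hXYb, hHexp, ?_⟩
    have e3 := abs_le.1 hXYb
    have f1 : |μ₂ * F P| ≤ |μ₂| * B1 := by
      rw [abs_mul]; exact mul_le_mul_of_nonneg_left hFb (abs_nonneg _)
    have f2 : |μ₁ * G P| ≤ |μ₁| * B1 := by
      rw [abs_mul]; exact mul_le_mul_of_nonneg_left hGb (abs_nonneg _)
    have g1 := abs_le.1 f1
    have g2 := abs_le.1 f2
    have g3 : -(|μ₁| * |μ₂|) ≤ μ₁ * μ₂ := by
      rw [← abs_mul]; exact neg_abs_le _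
    have g4 : μ₁ * μ₂ ≤ |μ₁| * |μ₂| := by
      rw [← abs_mul]; exact le_abs_self _
    rw [hHexp, abs_le, hBH]
    obtain ⟨e3a, e3b⟩ := e3
    obtain ⟨g1a, g1b⟩ := g1
    obtain ⟨g2a, g2b⟩ := g2
    constructor <;> linarith
  obtain ⟨P₀, hP₀⟩ := hS
  have hSsub : S ⊆ convHullP S := by
    intro P hP
    exact ⟨1, fun _ => 1, fun _ => P, by simp, fun _ => hP, by simp⟩
  have hFbddA : BddAbove (F '' S) := by
    refine ⟨B1, ?_⟩
    rintro _ ⟨P, hP, rfl⟩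
    exact (abs_le.1 (hfacts P hP).2.2.2.2.1).2
  have hFbddB : BddBelow (F '' S) := by
    refine ⟨-B1, ?_⟩
    rintro _ ⟨P, hP, rfl⟩
    exact (abs_le.1 (hfacts P hP).2.2.2.2.1).1
  have hGbddA : BddAbove (G '' S) := by
    refine ⟨B1, ?_⟩
    rintro _ ⟨P, hP, rfl⟩
    exact (abs_le.1 (hfacts P hP).2.2.2.2.2.1).2
  have hGbddB : BddBelow (G '' S) := by
    refine ⟨-B1, ?_⟩
    rintro _ ⟨P, hP, rfl⟩
    exact (abs_le.1 (hfacts P hP).2.2.2.2.2.1).1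
  have hHbdd : BddAbove (H '' S) := by
    refine ⟨BH, ?_⟩
    rintro _ ⟨P, hP, rfl⟩
    exact (abs_le.1 (hfacts P hP).2.2.2.2.2.2.2.2).2
  -- key: covariance over the convex hull is at most `sSup (H '' S)`
  have hcovle : ∀ Q ∈ convHullP S, covP Q X Y ≤ sSup (H '' S) := by
    rintro Q ⟨n, w, Ps, hw, hPs, rfl⟩
    set v : Fin n → ℝ := fun i => (w i).toReal with hv
    have hvnn : ∀ i, 0 ≤ v i := fun i => ENNReal.toReal_nonneg
    have hvsum : ∑ i, v i = 1 := by
      have h := ENNReal.toReal_sum (s := Finset.univ) (f := w) (fun i _ => w_ne_top hw i)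
      rw [hw] at h
      simpa using h.symm
    haveI : IsProbabilityMeasure (∑ i, w i • Ps i) :=
      isProb_convex_comb hw fun i => hprob _ (hPs i)
    have hIXi : ∀ i, Integrable X (Ps i) := fun i => (hfacts _ (hPs i)).1
    have hIYi : ∀ i, Integrable Y (Ps i) := fun i => (hfacts _ (hPs i)).2.1
    have hIXYi : ∀ i, Integrable (fun ω => X ω * Y ω) (Ps i) :=
      fun i => (hfacts _ (hPs i)).2.2.1
    have hIprodi : ∀ i, Integrable (fun ω => (X ω - μ₁) * (Y ω - μ₂)) (Ps i) :=
      fun i => (hfacts _ (hPs i)).2.2.2.1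
    have hFQ : F (∑ i, w i • Ps i) = ∑ i, v i * F (Ps i) :=
      integral_convex_comb hw X hIXi
    have hGQ : G (∑ i, w i • Ps i) = ∑ i, v i * G (Ps i) :=
      integral_convex_comb hw Y hIYi
    have hIXQ : Integrable X (∑ i, w i • Ps i) :=
      integrable_finset_sum_measure.2 fun i _ => (hIXi i).smul_measure (w_ne_top hw i)
    have hIYQ : Integrable Y (∑ i, w i • Ps i) :=
      integrable_finset_sum_measure.2 fun i _ => (hIYi i).smul_measure (w_ne_top hw i)
    have hIXYQ : Integrable (fun ω => X ω * Y ω) (∑ i, w i • Ps i) :=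
      integrable_finset_sum_measure.2 fun i _ => (hIXYi i).smul_measure (w_ne_top hw i)
    have hHQ : H (∑ i, w i • Ps i) = (∫ ω, X ω * Y ω ∂(∑ i, w i • Ps i))
        - μ₂ * F (∑ i, w i • Ps i) - μ₁ * G (∑ i, w i • Ps i) + μ₁ * μ₂ :=
      integral_expand _ μ₁ μ₂ hIXYQ hIXQ hIYQ
    have hcov : covP (∑ i, w i • Ps i) X Y
        = H (∑ i, w i • Ps i)
          - (F (∑ i, w i • Ps i) - μ₁) * (G (∑ i, w i • Ps i) - μ₂) := by
      rw [hHQ]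
      simp only [covP, hF, hG]
      ring
    have hprodnn : 0 ≤ (F (∑ i, w i • Ps i) - μ₁) * (G (∑ i, w i • Ps i) - μ₂) := by
      rcases hμ with ⟨h1, h2⟩ | ⟨h1, h2⟩
      · have hFle : F (∑ i, w i • Ps i) ≤ μ₁ := by
          rw [hFQ, h1]
          exact convex_sum_le hvnn hvsum fun i => le_csSup hFbddA ⟨Ps i, hPs i, rfl⟩
        have hGle : G (∑ i, w i • Ps i) ≤ μ₂ := by
          rw [hGQ, h2]
          exact convex_sum_le hvnn hvsum fun i => le_csSup hGbddA ⟨Ps i, hPs i, rfl⟩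
        nlinarith
      · have hFge : μ₁ ≤ F (∑ i, w i • Ps i) := by
          rw [hFQ, h1]
          exact convex_sum_ge hvnn hvsum fun i => csInf_le hFbddB ⟨Ps i, hPs i, rfl⟩
        have hGge : μ₂ ≤ G (∑ i, w i • Ps i) := by
          rw [hGQ, h2]
          exact convex_sum_ge hvnn hvsum fun i => csInf_le hGbddB ⟨Ps i, hPs i, rfl⟩
        nlinarith
    have hHle : H (∑ i, w i • Ps i) ≤ sSup (H '' S) := by
      have hsum : H (∑ i, w i • Ps i) = ∑ i, v i * H (Ps i) :=
        integral_convex_comb hw (fun ω => (X ω - μ₁) * (Y ω - μ₂)) hIprodi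
      rw [hsum]
      exact convex_sum_le hvnn hvsum fun i => le_csSup hHbdd ⟨Ps i, hPs i, rfl⟩
    linarith
  have hcovbdd : BddAbove ((fun P => covP P X Y) '' convHullP S) := by
    refine ⟨sSup (H '' S), ?_⟩
    rintro _ ⟨Q, hQ, rfl⟩
    exact hcovle Q hQ
  constructor
  · refine csSup_le ⟨covP P₀ X Y, P₀, hSsub hP₀, rfl⟩ ?_
    rintro _ ⟨Q, hQ, rfl⟩
    exact hcovle Q hQ
  · refine csSup_le ⟨H P₀, P₀, hP₀, rfl⟩ ?_
    rintro _ ⟨P, hP, rfl⟩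
    show H P ≤ _
    haveI := hprob P hP
    obtain ⟨hIX, hIY, hIXY, hIprod, hFb, hGb, hXYb, hHexp, hHb⟩ := hfacts P hP
    have hcovP : covP P X Y ≤ sSup ((fun P => covP P X Y) '' convHullP S) :=
      le_csSup hcovbdd ⟨P, hSsub hP, rfl⟩
    have hHPc : H P = covP P X Y + (F P - μ₁) * (G P - μ₂) := by
      rw [hHexp]
      simp only [covP, hF, hG]
      ring
    have hFu : F P ≤ sSup (F '' S) := le_csSup hFbddA ⟨P, hP, rfl⟩
    have hFl : sInf (F '' S) ≤ F P := csInf_le hFbddB ⟨P, hP, rfl⟩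
    have hGu : G P ≤ sSup (G '' S) := le_csSup hGbddA ⟨P, hP, rfl⟩
    have hGl : sInf (G '' S) ≤ G P := csInf_le hGbddB ⟨P, hP, rfl⟩
    have hprodle : (F P - μ₁) * (G P - μ₂)
        ≤ (sSup (F '' S) - sInf (F '' S)) * (sSup (G '' S) - sInf (G '' S)) := by
      rcases hμ with ⟨h1, h2⟩ | ⟨h1, h2⟩
      · have key : (μ₁ - F P) * (μ₂ - G P)
            ≤ (sSup (F '' S) - sInf (F '' S)) * (sSup (G '' S) - sInf (G '' S)) := by
          apply mul_le_mul
          · rw [h1]; linarith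
          · rw [h2]; linarith
          · rw [h2]; linarith
          · linarith [le_of_eq h1, hFu, hFl]
        nlinarith [key]
      · have key : (F P - μ₁) * (G P - μ₂)
            ≤ (sSup (F '' S) - sInf (F '' S)) * (sSup (G '' S) - sInf (G '' S)) := by
          apply mul_le_mul
          · rw [h1]; linarith
          · rw [h2]; linarith
          · rw [h2]; linarith
          · linarith [hFu, hFl]
        exact key
    linarith
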